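/- Fix a directed graph C and a phase space function 𝒫: C₀ → Euc. If φ: Γ → Γ' is an étale map of finite graphs over C such that the induced fully faithful functor G(φ): G(Γ) → G(Γ') is essentially surjective, then the induced linear map 𝕍(φ): 𝕍(Γ') → 𝕍(Γ) is an isomorphism of vector spaces. -/

import Mathlib

/-- A directed graph: a set of edges, a set of nodes, and source/target maps. -/
structure DGraph : Type 1 where
  V : Type
  E : Type
  s : E → V
  t : E → V

/-- A map of directed graphs. -/
@[ext]
structure GraphMap (G G' : DGraph) where
  vMap : G.V → G'.V
  eMap : G.E → G'.E
  hs : ∀ e, G'.s (eMap e) = vMap (G.s e)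
  ht : ∀ e, G'.t (eMap e) = vMap (G.t e)

namespace GraphMap

def id (G : DGraph) : GraphMap G G :=
  ⟨fun v => v, fun e => e, fun _ => rfl, fun _ => rfl⟩

def comp {G₁ G₂ G₃ : DGraph} (g : GraphMap G₂ G₃) (f : GraphMap G₁ G₂) :
    GraphMap G₁ G₃ where
  vMap v := g.vMap (f.vMap v)
  eMap e := g.eMap (f.eMap e)
  hs e := by rw [g.hs, f.hs]
  ht e := by rw [g.ht, f.ht]

end GraphMap

/-- A graph colored by the graph `C`, i.e. a graph together with a map of graphs to `C`. -/
structure CGraph (C : DGraph) : Type 1 where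
  gr : DGraph
  col : GraphMap gr C

/-- A map of graphs over `C`. -/
@[ext]
structure CMap {C : DGraph} (Γ Γ' : CGraph C) where
  toMap : GraphMap Γ.gr Γ'.gr
  hv : ∀ v, Γ'.col.vMap (toMap.vMap v) = Γ.col.vMap v
  he : ∀ e, Γ'.col.eMap (toMap.eMap e) = Γ.col.eMap e

namespace CMap

variable {C : DGraph}

def id (Γ : CGraph C) : CMap Γ Γ := ⟨GraphMap.id _, fun _ => rfl, fun _ => rfl⟩

def comp {Γ₁ Γ₂ Γ₃ : CGraph C} (g : CMap Γ₂ Γ₃) (f : CMap Γ₁ Γ₂) : CMap Γ₁ Γ₃ where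
  toMap := g.toMap.comp f.toMap
  hv v := by
    show Γ₃.col.vMap (g.toMap.vMap (f.toMap.vMap v)) = Γ₁.col.vMap v
    rw [g.hv, f.hv]
  he e := by
    show Γ₃.col.eMap (g.toMap.eMap (f.toMap.eMap e)) = Γ₁.col.eMap e
    rw [g.he, f.he]

/-- A map of graphs over `C` is an isomorphism iff it is bijective on nodes and edges. -/
def IsIso {Γ Γ' : CGraph C} (φ : CMap Γ Γ') : Prop :=
  Function.Bijective φ.toMap.vMap ∧ Function.Bijective φ.toMap.eMap

theorem isIso_id (Γ : CGraph C) : (CMap.id Γ).IsIso :=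
  ⟨Function.bijective_id, Function.bijective_id⟩

theorem IsIso.comp {Γ₁ Γ₂ Γ₃ : CGraph C} {g : CMap Γ₂ Γ₃} {f : CMap Γ₁ Γ₂}
    (hg : g.IsIso) (hf : f.IsIso) : (g.comp f).IsIso :=
  ⟨hg.1.comp hf.1, hg.2.comp hf.2⟩

end CMap

variable {C : DGraph}

/-- The set of edges of `Γ` with target `a`; these are both the edges and the
leaves of the input tree `I(a)`. -/
abbrev inEdge (Γ : CGraph C) (a : Γ.gr.V) : Type := {e : Γ.gr.E // Γ.gr.t e = a}

/-- The input tree `I(a)` of a node `a` of a graph `Γ` over `C`, as a graph over `C`. -/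
def inTree (Γ : CGraph C) (a : Γ.gr.V) : CGraph C where
  gr :=
    { V := Unit ⊕ inEdge Γ a
      E := inEdge Γ a
      s := Sum.inr
      t := fun _ => Sum.inl () }
  col :=
    { vMap := Sum.elim (fun _ => Γ.col.vMap a) (fun e => Γ.col.vMap (Γ.gr.s e.1))
      eMap := fun e => Γ.col.eMap e.1
      hs := fun e => Γ.col.hs e.1
      ht := fun e => by
        show C.t (Γ.col.eMap e.1) = Γ.col.vMap a
        rw [Γ.col.ht e.1, e.2] }

/-- The edge map `I(a) → I(φ(a))` induced by a map `φ` of graphs over `C`. -/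
def liftEdge {Γ Γ' : CGraph C} (φ : CMap Γ Γ') (a : Γ.gr.V) (e : inEdge Γ a) :
    inEdge Γ' (φ.toMap.vMap a) :=
  ⟨φ.toMap.eMap e.1, by rw [φ.toMap.ht, e.2]⟩

/-- The map of input trees `φ_a : I(a) → I(φ(a))` induced by a map `φ` of graphs over `C`. -/
def inMap {Γ Γ' : CGraph C} (φ : CMap Γ Γ') (a : Γ.gr.V) :
    CMap (inTree Γ a) (inTree Γ' (φ.toMap.vMap a)) where
  toMap :=
    { vMap := Sum.elim (fun _ => Sum.inl ()) (fun e => Sum.inr (liftEdge φ a e))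
      eMap := liftEdge φ a
      hs := fun _ => rfl
      ht := fun _ => rfl }
  hv v := by
    cases v with
    | inl u => exact φ.hv a
    | inr e =>
      show Γ'.col.vMap (Γ'.gr.s (φ.toMap.eMap e.1)) = Γ.col.vMap (Γ.gr.s e.1)
      rw [φ.toMap.hs, φ.hv]
  he e := φ.he e.1

/-- A map of graphs over `C` is *étale* if the induced maps of input trees are all
isomorphisms of graphs over `C`. -/
def IsEtale {Γ Γ' : CGraph C} (φ : CMap Γ Γ') : Prop :=
  ∀ a : Γ.gr.V, (inMap φ a).IsIso

section TreeLemmas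

variable {Γ Γ' : CGraph C} {a : Γ.gr.V} {b : Γ'.gr.V}

theorem CMap.vMap_inr (σ : CMap (inTree Γ a) (inTree Γ' b)) (e : inEdge Γ a) :
    σ.toMap.vMap (Sum.inr e) = Sum.inr (σ.toMap.eMap e) :=
  (σ.toMap.hs e).symm

/-- Maps of input trees preserve the colors of the sources of the leaves. -/
theorem leafColor (σ : CMap (inTree Γ a) (inTree Γ' b)) (e : inEdge Γ a) :
    Γ'.col.vMap (Γ'.gr.s (σ.toMap.eMap e).1) = Γ.col.vMap (Γ.gr.s e.1) := by
  have h := σ.hv (Sum.inr e)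
  rw [CMap.vMap_inr] at h
  exact h

/-- An isomorphism of input trees maps the root to the root. -/
theorem rootFixed (σ : CMap (inTree Γ a) (inTree Γ' b)) (hσ : σ.IsIso) :
    σ.toMap.vMap (Sum.inl ()) = Sum.inl () := by
  rcases h : σ.toMap.vMap (Sum.inl ()) with u | e'
  · cases u; rfl
  · obtain ⟨e, rfl⟩ := hσ.2.2 e'
    have ht : (Sum.inl () : Unit ⊕ inEdge Γ' b) = σ.toMap.vMap (Sum.inl ()) := σ.toMap.ht e
    rw [h] at ht
    exact absurd ht Sum.inl_ne_inr

/-- An isomorphism of input trees preserves the color of the root. -/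
theorem rootColor (σ : CMap (inTree Γ a) (inTree Γ' b)) (hσ : σ.IsIso) :
    Γ'.col.vMap b = Γ.col.vMap a := by
  have h := σ.hv (Sum.inl ())
  rw [rootFixed σ hσ] at h
  exact h

end TreeLemmas

/-! ### Phase spaces and control systems (Euclidean case) -/

set_option linter.unusedSectionVars false

variable (P : C.V → Type)
variable [∀ c, NormedAddCommGroup (P c)] [∀ c, NormedSpace ℝ (P c)]
  [∀ c, FiniteDimensional ℝ (P c)]

/-- Transport along an equality of colors. -/
def pcast {c c' : C.V} (h : c = c') : P c ≃ₗ[ℝ] P c' := by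
  subst h; exact LinearEquiv.refl ℝ (P c)

/-- The (linear) map `ℙ f : ℙ X → ℙ Y` induced by a map `f : Y → X` of sets over the
set of colors. -/
def phasePull {X Y : Type} (α : X → C.V) (β : Y → C.V) (f : Y → X)
    (hc : ∀ y, α (f y) = β y) :
    (∀ x, P (α x)) →ₗ[ℝ] (∀ y, P (β y)) where
  toFun v y := pcast P (hc y) (v (f y))
  map_add' u v := by funext y; simp
  map_smul' r v := by funext y; simp

theorem pcast_contDiff {c c' : C.V} (h : c = c') :
    ContDiff ℝ (⊤ : ℕ∞) (pcast P h) := by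
  subst h; exact contDiff_id

theorem phasePull_contDiff {X Y : Type} [Fintype X] [Fintype Y]
    (α : X → C.V) (β : Y → C.V) (f : Y → X) (hc : ∀ y, α (f y) = β y) :
    ContDiff ℝ (⊤ : ℕ∞) (phasePull P α β f hc) :=
  contDiff_pi.2 fun y =>
    (pcast_contDiff P (hc y)).comp
      ((ContinuousLinearMap.proj (R := ℝ) (φ := fun x => P (α x)) (f y)).contDiff)

/-- The vector space of smooth maps between two Euclidean spaces, as a submodule of the
space of all maps. -/
def SmoothMaps (V W : Type) [NormedAddCommGroup V] [NormedSpace ℝ V]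
    [NormedAddCommGroup W] [NormedSpace ℝ W] : Submodule ℝ (V → W) where
  carrier := {f | ContDiff ℝ (⊤ : ℕ∞) f}
  add_mem' := fun {f g} hf hg => by
    simp only [Set.mem_setOf_eq] at *
    exact hf.add hg
  zero_mem' := by
    simp only [Set.mem_setOf_eq]
    exact contDiff_const
  smul_mem' := fun c f hf => by
    simp only [Set.mem_setOf_eq] at *
    exact hf.const_smul c

theorem mem_smoothMaps_iff {V W : Type} [NormedAddCommGroup V] [NormedSpace ℝ V]
    [NormedAddCommGroup W] [NormedSpace ℝ W] (f : V → W) :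
    f ∈ SmoothMaps V W ↔ ContDiff ℝ (⊤ : ℕ∞) f := Iff.rfl

noncomputable instance instFintypeInEdge (Γ : CGraph C) [Fintype Γ.gr.E] (a : Γ.gr.V) :
    Fintype (inEdge Γ a) := Fintype.ofFinite _

/-- The phase space `ℙ(lv I(a))` of the leaves of the input tree of `a`. -/
abbrev LeafSpace (Γ : CGraph C) (a : Γ.gr.V) : Type :=
  ∀ e : inEdge Γ a, P (Γ.col.vMap (Γ.gr.s e.1))

/-- The space of control systems associated to the input tree of a node `a`:
all smooth maps from the phase space of the leaves to the phase space of the root. -/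
noncomputable def Ctrl (Γ : CGraph C) [Fintype Γ.gr.E] (a : Γ.gr.V) :
    Submodule ℝ (LeafSpace P Γ a → P (Γ.col.vMap a)) :=
  SmoothMaps _ _

/-- The map `ℙ(σ|_{lv}) : ℙ(lv I(b)) → ℙ(lv I(a))` induced by a map of input trees
`σ : I(a) → I(b)`. -/
noncomputable def leafPull {Γ Γ' : CGraph C} [Fintype Γ.gr.E] [Fintype Γ'.gr.E]
    {a : Γ.gr.V} {b : Γ'.gr.V} (σ : CMap (inTree Γ a) (inTree Γ' b)) :
    LeafSpace P Γ' b →ₗ[ℝ] LeafSpace P Γ a :=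
  phasePull P (fun e' : inEdge Γ' b => Γ'.col.vMap (Γ'.gr.s e'.1))
    (fun e : inEdge Γ a => Γ.col.vMap (Γ.gr.s e.1)) σ.toMap.eMap (leafColor σ)

theorem leafPull_contDiff {Γ Γ' : CGraph C} [Fintype Γ.gr.E] [Fintype Γ'.gr.E]
    {a : Γ.gr.V} {b : Γ'.gr.V} (σ : CMap (inTree Γ a) (inTree Γ' b)) :
    ContDiff ℝ (⊤ : ℕ∞) (leafPull P σ) :=
  phasePull_contDiff P _ _ _ _

/-- The action `Ctrl(σ) X = X ∘ ℙ(σ|_{lv})` of an isomorphism of input trees on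
control systems. -/
noncomputable def ctrlMap {Γ Γ' : CGraph C} [Fintype Γ.gr.E] [Fintype Γ'.gr.E]
    {a : Γ.gr.V} {b : Γ'.gr.V}
    (σ : CMap (inTree Γ a) (inTree Γ' b)) (hσ : σ.IsIso) :
    ↥(Ctrl P Γ a) →ₗ[ℝ] ↥(Ctrl P Γ' b) where
  toFun X :=
    ⟨fun v => pcast P (rootColor σ hσ).symm (X.1 (leafPull P σ v)),
      by
        have hX : ContDiff ℝ (⊤ : ℕ∞) X.1 := X.2
        exact (pcast_contDiff P (rootColor σ hσ).symm).comp
          (hX.comp (leafPull_contDiff P σ))⟩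
  map_add' X Y := by
    apply Subtype.ext
    funext v
    simp
  map_smul' r X := by
    apply Subtype.ext
    funext v
    simp

/-- The space of virtual groupoid-invariant vector fields on a finite graph over `C`:
the invariants (limit) of the action of the symmetry groupoid `G(Γ)` on the spaces of
control systems of the input trees. -/
noncomputable def VSpace (Γ : CGraph C) [Fintype Γ.gr.E] :
    Submodule ℝ (∀ a : Γ.gr.V, ↥(Ctrl P Γ a)) where
  carrier := {X | ∀ (a b : Γ.gr.V) (σ : CMap (inTree Γ a) (inTree Γ b)) (hσ : σ.IsIso),
    ctrlMap P σ hσ (X a) = X b}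
  add_mem' := fun hX hY a b σ hσ => by
    simp only [Set.mem_setOf_eq] at *
    simp only [Pi.add_apply, map_add]
    rw [hX a b σ hσ, hY a b σ hσ]
  zero_mem' := fun a b σ hσ => by simp
  smul_mem' := fun r X hX a b σ hσ => by
    simp only [Set.mem_setOf_eq] at *
    simp only [Pi.smul_apply, map_smul]
    rw [hX a b σ hσ]

/-- The canonical projection `ϖ_a : 𝕍(Γ) → Ctrl(I(a))`. -/
noncomputable def Vproj (Γ : CGraph C) [Fintype Γ.gr.E] (a : Γ.gr.V) :
    ↥(VSpace P Γ) →ₗ[ℝ] ↥(Ctrl P Γ a) :=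
  (LinearMap.proj a).comp (VSpace P Γ).subtype

/-- The total phase space `ℙ Γ₀` of a graph over `C`. -/
abbrev TotalPhase (Γ : CGraph C) : Type := ∀ a : Γ.gr.V, P (Γ.col.vMap a)

/-- The map `ℙ(ξ|_{lv I(a)}) : ℙ Γ₀ → ℙ lv I(a)` induced by the canonical map
`ξ : I(a) → Γ`. -/
noncomputable def leafRestrict (Γ : CGraph C) [Fintype Γ.gr.E] (a : Γ.gr.V) :
    TotalPhase P Γ →ₗ[ℝ] LeafSpace P Γ a :=
  phasePull P Γ.col.vMap (fun e : inEdge Γ a => Γ.col.vMap (Γ.gr.s e.1))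
    (fun e : inEdge Γ a => Γ.gr.s e.1) (fun _ => rfl)

/-- The space of (smooth) vector fields on the total phase space of `Γ`. -/
noncomputable def VF (Γ : CGraph C) [Fintype Γ.gr.V] :
    Submodule ℝ (TotalPhase P Γ → TotalPhase P Γ) :=
  SmoothMaps _ _

/-- The map `S_Γ` sending a virtual groupoid-invariant vector field to an actual
vector field on the phase space `ℙ Γ₀`; its component at a node `a` is
`ϖ_a(v) ∘ ℙ(ξ|_{lv I(a)})`. -/
noncomputable def SMap (Γ : CGraph C) [Fintype Γ.gr.E] [Fintype Γ.gr.V] :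
    ↥(VSpace P Γ) →ₗ[ℝ] ↥(VF P Γ) where
  toFun v :=
    ⟨fun x a => (v.1 a).1 (leafRestrict P Γ a x),
      contDiff_pi.2 fun a =>
        ContDiff.comp (show ContDiff ℝ (⊤ : ℕ∞) (v.1 a).1 from (v.1 a).2)
          (phasePull_contDiff P _ _ _ _)⟩
  map_add' u v := by
    apply Subtype.ext
    funext x a
    simp
  map_smul' r v := by
    apply Subtype.ext
    funext x a
    simp

/-! ### Auxiliary lemmas -/

section Aux

theorem pcast_self {c : C.V} (h : c = c) (x : P c) : pcast P h x = x := rfl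

theorem pcast_pcast {c₁ c₂ c₃ : C.V} (h₁ : c₁ = c₂) (h₂ : c₂ = c₃) (x : P c₁) :
    pcast P h₂ (pcast P h₁ x) = pcast P (h₁.trans h₂) x := by
  subst h₁; subst h₂; rfl

theorem ofBij_apply_symm {α β : Type*} (f : α → β) (h : Function.Bijective f) (x : β) :
    f ((Equiv.ofBijective f h).symm x) = x :=
  (Equiv.ofBijective f h).apply_symm_apply x

/-- The inverse of an isomorphism of graphs over `C`. -/
noncomputable def CMap.invMap {Γ Γ' : CGraph C} (φ : CMap Γ Γ') (h : φ.IsIso) :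
    CMap Γ' Γ where
  toMap :=
    { vMap := (Equiv.ofBijective _ h.1).symm
      eMap := (Equiv.ofBijective _ h.2).symm
      hs := fun e => by
        apply h.1.1
        rw [← φ.toMap.hs, ofBij_apply_symm φ.toMap.eMap h.2, ofBij_apply_symm φ.toMap.vMap h.1]
      ht := fun e => by
        apply h.1.1
        rw [← φ.toMap.ht, ofBij_apply_symm φ.toMap.eMap h.2, ofBij_apply_symm φ.toMap.vMap h.1] }
  hv := fun v =>
    (φ.hv _).symm.trans (congrArg Γ'.col.vMap (ofBij_apply_symm _ h.1 v))
  he := fun e =>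
    (φ.he _).symm.trans (congrArg Γ'.col.eMap (ofBij_apply_symm _ h.2 e))

theorem CMap.invMap_isIso {Γ Γ' : CGraph C} (φ : CMap Γ Γ') (h : φ.IsIso) :
    (φ.invMap h).IsIso :=
  ⟨(Equiv.ofBijective _ h.1).symm.bijective, (Equiv.ofBijective _ h.2).symm.bijective⟩

theorem CMap.invMap_comp {Γ Γ' : CGraph C} (φ : CMap Γ Γ') (h : φ.IsIso) :
    (φ.invMap h).comp φ = CMap.id Γ := by
  apply CMap.ext
  apply GraphMap.ext
  · funext v; exact (Equiv.ofBijective _ h.1).symm_apply_apply v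
  · funext e; exact (Equiv.ofBijective _ h.2).symm_apply_apply e

theorem CMap.comp_invMap {Γ Γ' : CGraph C} (φ : CMap Γ Γ') (h : φ.IsIso) :
    φ.comp (φ.invMap h) = CMap.id Γ' := by
  apply CMap.ext
  apply GraphMap.ext
  · funext v; exact (Equiv.ofBijective _ h.1).apply_symm_apply v
  · funext e; exact (Equiv.ofBijective _ h.2).apply_symm_apply e

variable {Γ Γ' Γ'' : CGraph C} [Fintype Γ.gr.E] [Fintype Γ'.gr.E] [Fintype Γ''.gr.E]

theorem ctrlMap_congr {a : Γ.gr.V} {b : Γ'.gr.V}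
    {σ σ' : CMap (inTree Γ a) (inTree Γ' b)} (h : σ = σ')
    (hσ : σ.IsIso) (hσ' : σ'.IsIso) (X : ↥(Ctrl P Γ a)) :
    ctrlMap P σ hσ X = ctrlMap P σ' hσ' X := by subst h; rfl

theorem ctrlMap_id {a : Γ.gr.V} (h : (CMap.id (inTree Γ a)).IsIso) (X : ↥(Ctrl P Γ a)) :
    ctrlMap P (CMap.id (inTree Γ a)) h X = X := by
  apply Subtype.ext
  funext w
  show pcast P _ (X.1 (leafPull P (CMap.id (inTree Γ a)) w)) = X.1 w
  have hlp : leafPull P (CMap.id (inTree Γ a)) w = w := by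
    funext e
    show pcast P (leafColor (CMap.id (inTree Γ a)) e) (w e) = w e
    exact pcast_self P _ _
  rw [hlp, pcast_self]

theorem ctrlMap_comp {a : Γ.gr.V} {b : Γ'.gr.V} {c : Γ''.gr.V}
    (σ : CMap (inTree Γ a) (inTree Γ' b)) (τ : CMap (inTree Γ' b) (inTree Γ'' c))
    (hσ : σ.IsIso) (hτ : τ.IsIso) (X : ↥(Ctrl P Γ a)) :
    ctrlMap P (τ.comp σ) (hτ.comp hσ) X = ctrlMap P τ hτ (ctrlMap P σ hσ X) := by
  apply Subtype.ext
  funext w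
  show pcast P _ (X.1 (leafPull P (τ.comp σ) w)) =
    pcast P _ (pcast P _ (X.1 (leafPull P σ (leafPull P τ w))))
  have hlp : leafPull P (τ.comp σ) w = leafPull P σ (leafPull P τ w) := by
    funext e
    show pcast P _ (w (τ.toMap.eMap (σ.toMap.eMap e))) =
      pcast P _ (pcast P _ (w (τ.toMap.eMap (σ.toMap.eMap e))))
    rw [pcast_pcast]
  rw [hlp, pcast_pcast]

theorem ctrlMap_cancel_right {a : Γ.gr.V} {b : Γ'.gr.V}
    (σ : CMap (inTree Γ a) (inTree Γ' b)) (hσ : σ.IsIso) (X : ↥(Ctrl P Γ a)) :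
    ctrlMap P (σ.invMap hσ) (σ.invMap_isIso hσ) (ctrlMap P σ hσ X) = X :=
  (ctrlMap_comp P σ (σ.invMap hσ) hσ (σ.invMap_isIso hσ) X).symm.trans
    ((ctrlMap_congr P (σ.invMap_comp hσ) _ (CMap.isIso_id _) X).trans
      (ctrlMap_id P _ X))

theorem ctrlMap_cancel_left {a : Γ.gr.V} {b : Γ'.gr.V}
    (σ : CMap (inTree Γ a) (inTree Γ' b)) (hσ : σ.IsIso) (X : ↥(Ctrl P Γ' b)) :
    ctrlMap P σ hσ (ctrlMap P (σ.invMap hσ) (σ.invMap_isIso hσ) X) = X :=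
  (ctrlMap_comp P (σ.invMap hσ) σ (σ.invMap_isIso hσ) hσ X).symm.trans
    ((ctrlMap_congr P (σ.comp_invMap hσ) _ (CMap.isIso_id _) X).trans
      (ctrlMap_id P _ X))

theorem ctrlMap_injective {a : Γ.gr.V} {b : Γ'.gr.V}
    (σ : CMap (inTree Γ a) (inTree Γ' b)) (hσ : σ.IsIso) :
    Function.Injective (ctrlMap P σ hσ) := by
  intro X Y h
  have := congrArg (ctrlMap P (σ.invMap hσ) (σ.invMap_isIso hσ)) h
  rwa [ctrlMap_cancel_right, ctrlMap_cancel_right] at this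

/-- The key independence lemma: the transported control system does not depend on the
choice of node and isomorphism witnessing essential surjectivity. -/
theorem ctrl_transport_indep (φ : CMap Γ Γ') (hφ : IsEtale φ) (v : ↥(VSpace P Γ))
    {a₁ a₂ : Γ.gr.V} {b' : Γ'.gr.V}
    (σ₁ : CMap (inTree Γ' (φ.toMap.vMap a₁)) (inTree Γ' b')) (h₁ : σ₁.IsIso)
    (σ₂ : CMap (inTree Γ' (φ.toMap.vMap a₂)) (inTree Γ' b')) (h₂ : σ₂.IsIso) :
    ctrlMap P σ₁ h₁ (ctrlMap P (inMap φ a₁) (hφ a₁) (v.1 a₁)) =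
      ctrlMap P σ₂ h₂ (ctrlMap P (inMap φ a₂) (hφ a₂) (v.1 a₂)) := by
  set ρ : CMap (inTree Γ' (φ.toMap.vMap a₁)) (inTree Γ' (φ.toMap.vMap a₂)) :=
    (σ₂.invMap h₂).comp σ₁ with hρdef
  have hρ : ρ.IsIso := (σ₂.invMap_isIso h₂).comp h₁
  set ρ' : CMap (inTree Γ a₁) (inTree Γ a₂) :=
    ((inMap φ a₂).invMap (hφ a₂)).comp (ρ.comp (inMap φ a₁)) with hρ'def
  have hρ' : ρ'.IsIso := ((inMap φ a₂).invMap_isIso (hφ a₂)).comp (hρ.comp (hφ a₁))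
  have hv2 : v.1 a₂ = ctrlMap P ρ' hρ' (v.1 a₁) := (v.2 a₁ a₂ ρ' hρ').symm
  rw [hv2]
  rw [show ctrlMap P ρ' hρ' (v.1 a₁) =
      ctrlMap P ((inMap φ a₂).invMap (hφ a₂)) ((inMap φ a₂).invMap_isIso (hφ a₂))
        (ctrlMap P (ρ.comp (inMap φ a₁)) (hρ.comp (hφ a₁)) (v.1 a₁)) from
    ctrlMap_comp P _ _ _ _ _]
  rw [ctrlMap_cancel_left]
  rw [show ctrlMap P (ρ.comp (inMap φ a₁)) (hρ.comp (hφ a₁)) (v.1 a₁) =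
      ctrlMap P ρ hρ (ctrlMap P (inMap φ a₁) (hφ a₁) (v.1 a₁)) from
    ctrlMap_comp P _ _ _ _ _]
  rw [show ctrlMap P ρ hρ (ctrlMap P (inMap φ a₁) (hφ a₁) (v.1 a₁)) =
      ctrlMap P (σ₂.invMap h₂) (σ₂.invMap_isIso h₂)
        (ctrlMap P σ₁ h₁ (ctrlMap P (inMap φ a₁) (hφ a₁) (v.1 a₁))) from
    ctrlMap_comp P _ _ _ _ _]
  rw [ctrlMap_cancel_left]

end Aux

/-- If `φ : Γ → Γ'` is an étale map of finite graphs over `C` such that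
the induced (fully faithful) functor `G(φ) : G(Γ) → G(Γ')` is essentially surjective,
then the induced linear map `𝕍(φ) : 𝕍(Γ') → 𝕍(Γ)` — i.e. the unique linear map `L`
with `ϖ_a ∘ L = Ctrl(φ_a)⁻¹ ∘ ϖ_{φ(a)}` for all nodes `a` — is an isomorphism of
vector spaces. -/
theorem Vmap_isIso_of_essSurj {C : DGraph} (P : C.V → Type)
    [∀ c, NormedAddCommGroup (P c)] [∀ c, NormedSpace ℝ (P c)]
    [∀ c, FiniteDimensional ℝ (P c)]
    {Γ Γ' : CGraph C} [Fintype Γ.gr.E] [Fintype Γ'.gr.E]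
    (φ : CMap Γ Γ') (hφ : IsEtale φ)
    (hsurj : ∀ b' : Γ'.gr.V, ∃ a : Γ.gr.V,
      ∃ σ : CMap (inTree Γ' (φ.toMap.vMap a)) (inTree Γ' b'), σ.IsIso)
    (L : ↥(VSpace P Γ') →ₗ[ℝ] ↥(VSpace P Γ))
    (hL : ∀ (a : Γ.gr.V) (w : ↥(VSpace P Γ')),
      ctrlMap P (inMap φ a) (hφ a) (Vproj P Γ a (L w)) =
        Vproj P Γ' (φ.toMap.vMap a) w) :
    Function.Bijective L := by
  classical
  have hVproj : ∀ (Δ : CGraph C) (_ : Fintype Δ.gr.E) (a : Δ.gr.V) (x : ↥(VSpace P Δ)),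
      Vproj P Δ a x = x.1 a := fun _ _ _ _ => rfl
  constructor
  · -- injectivity
    intro w₁ w₂ h
    apply Subtype.ext
    funext b'
    obtain ⟨a, σ, hσ⟩ := hsurj b'
    have h1 := hL a w₁
    have h2 := hL a w₂
    rw [h] at h1
    have hφa : w₁.1 (φ.toMap.vMap a) = w₂.1 (φ.toMap.vMap a) := by
      rw [hVproj, hVproj] at h1 h2
      exact h1.symm.trans h2
    calc w₁.1 b' = ctrlMap P σ hσ (w₁.1 (φ.toMap.vMap a)) := (w₁.2 _ _ σ hσ).symm
      _ = ctrlMap P σ hσ (w₂.1 (φ.toMap.vMap a)) := by rw [hφa]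
      _ = w₂.1 b' := w₂.2 _ _ σ hσ
  · -- surjectivity
    intro v
    let A : Γ'.gr.V → Γ.gr.V := fun b' => (hsurj b').choose
    let S : ∀ b', CMap (inTree Γ' (φ.toMap.vMap (A b'))) (inTree Γ' b') :=
      fun b' => (hsurj b').choose_spec.choose
    have hS : ∀ b', (S b').IsIso := fun b' => (hsurj b').choose_spec.choose_spec
    let wfun : ∀ b', ↥(Ctrl P Γ' b') := fun b' =>
      ctrlMap P (S b') (hS b')
        (ctrlMap P (inMap φ (A b')) (hφ (A b')) (v.1 (A b')))
    have hw : wfun ∈ VSpace P Γ' := by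
      intro b₁ b₂ τ hτ
      show ctrlMap P τ hτ (wfun b₁) = wfun b₂
      have hc := ctrlMap_comp P (S b₁) τ (hS b₁) hτ
        (ctrlMap P (inMap φ (A b₁)) (hφ (A b₁)) (v.1 (A b₁)))
      refine hc.symm.trans ?_
      exact ctrl_transport_indep P φ hφ v (τ.comp (S b₁)) (hτ.comp (hS b₁))
        (S b₂) (hS b₂)
    refine ⟨⟨wfun, hw⟩, ?_⟩
    apply Subtype.ext
    funext a
    have h1 := hL a ⟨wfun, hw⟩
    rw [hVproj, hVproj] at h1
    have h2 : wfun (φ.toMap.vMap a) = ctrlMap P (inMap φ a) (hφ a) (v.1 a) := by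
      have hk := ctrl_transport_indep P φ hφ v (S (φ.toMap.vMap a)) (hS _)
        (CMap.id (inTree Γ' (φ.toMap.vMap a))) (CMap.isIso_id _)
      rw [ctrlMap_id] at hk
      exact hk
    apply ctrlMap_injective P (inMap φ a) (hφ a)
    exact h1.trans h2
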